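/- arXiv:1907.11495 — 2 statements merged into one kernel-verified Lean document; each statement's English description precedes it below -/
import Mathlib

section
/- For every natural number N ≥ 1 and every real φ, with U₁^z = (|0⟩⟨0| + e^{iφ}|1⟩⟨1|) ⊗ I₂^{⊗(N−1)}, the conjugated witness U₁^z · W²_GHZ · (U₁^z)† equals (1/2)·I − 𝒵 − (1/4)·(cos φ · σx + sin φ · σy) ⊗ σx^{⊗(N−1)}, where W²_GHZ = (1/2)·I − 𝒵 − (1/4)·σx^{⊗N} and 𝒵 = (|0^N⟩⟨0^N| + |1^N⟩⟨1^N|)/2. -/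
open Matrix Complex

noncomputable section

/-- Pauli X matrix. -/
def pX : Matrix (Fin 2) (Fin 2) ℂ := !![0, 1; 1, 0]

/-- Pauli Y matrix. -/
def pY : Matrix (Fin 2) (Fin 2) ℂ := !![0, -Complex.I; Complex.I, 0]

/-- Kronecker product of a family of single-qubit operators, one for each of the `N` qubits. -/
def tensorVec (N : ℕ) (A : Fin N → Matrix (Fin 2) (Fin 2) ℂ) :
    Matrix (Fin N → Fin 2) (Fin N → Fin 2) ℂ :=
  Matrix.of fun b c => ∏ j, A j (b j) (c j)

/-- N-fold Kronecker (tensor) power of a single-qubit operator. -/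
def tensorPow (N : ℕ) (A : Matrix (Fin 2) (Fin 2) ℂ) :
    Matrix (Fin N → Fin 2) (Fin N → Fin 2) ℂ :=
  tensorVec N fun _ => A

/-- The all-zeros bit string, indexing `|0^N⟩`. -/
def zeros (N : ℕ) : Fin N → Fin 2 := fun _ => 0

/-- The all-ones bit string, indexing `|1^N⟩`. -/
def ones (N : ℕ) : Fin N → Fin 2 := fun _ => 1

/-- `𝒵 = (|0^N⟩⟨0^N| + |1^N⟩⟨1^N|)/2`. -/
def Zop (N : ℕ) : Matrix (Fin N → Fin 2) (Fin N → Fin 2) ℂ :=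
  ((1 : ℂ) / 2) • (Matrix.single (zeros N) (zeros N) (1 : ℂ)
    + Matrix.single (ones N) (ones N) (1 : ℂ))

/-- The two-setting GHZ witness `W²_GHZ = (1/2)·I − 𝒵 − (1/4)·σx^{⊗N}`. -/
def W2ghz (N : ℕ) : Matrix (Fin N → Fin 2) (Fin N → Fin 2) ℂ :=
  ((1 : ℂ) / 2) • (1 : Matrix (Fin N → Fin 2) (Fin N → Fin 2) ℂ) - Zop N
    - ((1 : ℂ) / 4) • tensorPow N pX

/-- `U₁^z = (|0⟩⟨0| + e^{iφ}|1⟩⟨1|) ⊗ I₂^{⊗(N−1)}`: a Z-rotation on the first qubit. -/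
def U1z (N : ℕ) (φ : ℝ) : Matrix (Fin N → Fin 2) (Fin N → Fin 2) ℂ :=
  tensorVec N fun j =>
    if (j : ℕ) = 0 then !![1, 0; 0, Complex.exp (Complex.I * φ)] else 1

/-- Diagonal entries of `U1z`. -/
def dvec (N : ℕ) (φ : ℝ) (b : Fin N → Fin 2) : ℂ :=
  ∏ j : Fin N, (if (j : ℕ) = 0 then !![1, 0; 0, Complex.exp (Complex.I * φ)] else 1) (b j) (b j)

lemma exp_I_phi (φ : ℝ) :
    Complex.exp (Complex.I * φ) = (Real.cos φ : ℂ) + (Real.sin φ : ℂ) * Complex.I := by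
  rw [mul_comm, Complex.exp_mul_I, Complex.ofReal_cos, Complex.ofReal_sin]

lemma star_exp_I_phi (φ : ℝ) :
    (starRingEnd ℂ) (Complex.exp (Complex.I * φ)) = (Real.cos φ : ℂ) - (Real.sin φ : ℂ) * Complex.I := by
  rw [exp_I_phi]
  simp [Complex.ext_iff]

lemma U1z_eq_diagonal (N : ℕ) (φ : ℝ) :
    U1z N φ = Matrix.diagonal (dvec N φ) := by
  ext b c
  by_cases h : b = c
  · subst h
    rw [Matrix.diagonal_apply_eq]
    rfl
  · rw [Matrix.diagonal_apply_ne _ h]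
    obtain ⟨j, hj⟩ := Function.ne_iff.mp h
    refine Finset.prod_eq_zero (Finset.mem_univ j) ?_
    revert hj
    generalize b j = x
    generalize c j = y
    intro hxy
    by_cases h0 : (j : ℕ) = 0
    · simp only [if_pos h0]
      fin_cases x <;> fin_cases y <;> simp_all
    · simp [if_neg h0, Matrix.one_apply, hxy]

lemma dvec_mul_star (N : ℕ) (φ : ℝ) (b : Fin N → Fin 2) :
    dvec N φ b * star (dvec N φ b) = 1 := by
  unfold dvec
  rw [star_prod, ← Finset.prod_mul_distrib]
  refine Finset.prod_eq_one fun j _ => ?_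
  by_cases h0 : (j : ℕ) = 0
  · simp only [if_pos h0]
    generalize b j = x
    have hkey : Complex.exp (Complex.I * φ) * (starRingEnd ℂ) (Complex.exp (Complex.I * φ)) = 1 := by
      rw [star_exp_I_phi, exp_I_phi]
      have hc := Real.sin_sq_add_cos_sq φ
      have h2 : ((Real.sin φ : ℂ))^2 + ((Real.cos φ : ℂ))^2 = 1 := by
        have h3 := Complex.sin_sq_add_cos_sq (φ : ℂ)
        rw [← Complex.ofReal_sin, ← Complex.ofReal_cos] at h3
        exact h3
      linear_combination h2 - ((Real.sin φ : ℂ))^2 * Complex.I_sq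
    fin_cases x <;> simp [hkey]
  · simp [if_neg h0, Matrix.one_apply]

lemma key_prod (N : ℕ) (φ : ℝ) (b c : Fin N → Fin 2) :
    dvec N φ b * tensorPow N pX b c * star (dvec N φ c)
      = tensorVec N (fun j =>
          if (j : ℕ) = 0 then
            ((Real.cos φ : ℝ) : ℂ) • pX + ((Real.sin φ : ℝ) : ℂ) • pY
          else pX) b c := by
  unfold dvec tensorPow tensorVec
  simp only [Matrix.of_apply]
  rw [star_prod, ← Finset.prod_mul_distrib, ← Finset.prod_mul_distrib]
  refine Finset.prod_congr rfl fun j _ => ?_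
  by_cases h0 : (j : ℕ) = 0
  · simp only [if_pos h0]
    generalize b j = x
    generalize c j = y
    fin_cases x <;> fin_cases y <;>
      simp [pX, pY, star_exp_I_phi, exp_I_phi, ← Complex.cos_conj, ← Complex.sin_conj,
        Complex.conj_ofReal] <;> ring
  · simp [if_neg h0, Matrix.one_apply]

lemma one_ite_zero {α : Type*} [DecidableEq α] (b c : α) :
    (1 : Matrix α α ℂ) b c = if b = c then 1 else 0 := Matrix.one_apply

theorem conjugated_two_setting_witness (N : ℕ) (hN : 1 ≤ N) (φ : ℝ) :
    U1z N φ * W2ghz N * (U1z N φ)ᴴ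
      = ((1 : ℂ) / 2) • (1 : Matrix (Fin N → Fin 2) (Fin N → Fin 2) ℂ) - Zop N
          - ((1 : ℂ) / 4) •
              tensorVec N (fun j =>
                if (j : ℕ) = 0 then
                  ((Real.cos φ : ℝ) : ℂ) • pX + ((Real.sin φ : ℝ) : ℂ) • pY
                else pX) := by
  rw [U1z_eq_diagonal, Matrix.diagonal_conjTranspose]
  ext b c
  rw [Matrix.mul_diagonal, Matrix.diagonal_mul]
  simp only [Matrix.sub_apply, Matrix.smul_apply, Pi.star_apply, smul_eq_mul, W2ghz]
  have h1 : dvec N φ b * ((1 : Matrix (Fin N → Fin 2) (Fin N → Fin 2) ℂ) b c)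
      * star (dvec N φ c) = (1 : Matrix (Fin N → Fin 2) (Fin N → Fin 2) ℂ) b c := by
    by_cases h : b = c
    · subst h
      rw [Matrix.one_apply_eq, mul_one, dvec_mul_star]
    · rw [Matrix.one_apply_ne h, mul_zero, zero_mul]
  have h2 : dvec N φ b * Zop N b c * star (dvec N φ c) = Zop N b c := by
    by_cases h : b = c
    · subst h
      rw [mul_right_comm, dvec_mul_star, one_mul]
    · have hz : Zop N b c = 0 := by
        simp only [Zop, Matrix.smul_apply, Matrix.add_apply, Matrix.single,
          Matrix.of_apply]
        rw [if_neg, if_neg, add_zero, smul_zero]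
        · rintro ⟨rfl, rfl⟩; exact h rfl
        · rintro ⟨rfl, rfl⟩; exact h rfl
      rw [hz, mul_zero, zero_mul]
  have h3 := key_prod N φ b c
  calc dvec N φ b * ((((1:ℂ)/2) • (1 : Matrix (Fin N → Fin 2) (Fin N → Fin 2) ℂ)
        - Zop N - ((1:ℂ)/4) • tensorPow N pX) b c) * star (dvec N φ c)
      = (1:ℂ)/2 * (dvec N φ b * ((1 : Matrix (Fin N → Fin 2) (Fin N → Fin 2) ℂ) b c)
          * star (dvec N φ c))
        - dvec N φ b * Zop N b c * star (dvec N φ c)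
        - (1:ℂ)/4 * (dvec N φ b * tensorPow N pX b c * star (dvec N φ c)) := by
        simp only [Matrix.sub_apply, Matrix.smul_apply, smul_eq_mul]; ring
    _ = _ := by rw [h1, h2, h3]
end
end

section
/- For every natural number N ≥ 1 and all reals θ, φ, let v = cos θ |0⟩ + e^{iφ} sin θ |1⟩ ∈ ℂ² and let U_CNOT = [C_{N−1}X_N]⋯[C_2X_3][C_1X_2] be the product of CNOT gates applied in sequence along the chain (with the empty product for N = 1 read as the identity). Then U_CNOT · ((2·v v† − I₂) ⊗ I₂^{⊗(N−1)}) · U_CNOT† = cos(2θ)·(σz ⊗ I₂^{⊗(N−1)}) + sin(2θ)·(cos φ · σx^{⊗N} + sin φ · σy ⊗ σx^{⊗(N−1)}). -/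
open Matrix Complex

noncomputable section

/-- Pauli Z matrix. -/
def pZ : Matrix (Fin 2) (Fin 2) ℂ := !![1, 0; 0, -1]

/-- The CNOT gate `C_iX_j` with control qubit `i` and target qubit `j`:
it maps the basis state `|c⟩` to `|c'⟩` where `c'` flips bit `j` iff bit `i` is 1. -/
def cnot (N : ℕ) (i j : Fin N) : Matrix (Fin N → Fin 2) (Fin N → Fin 2) ℂ :=
  Matrix.of fun b c => if b = Function.update c j (c j + c i) then 1 else 0

/-- The CNOT chain `U_CNOT = [C_{N−1}X_N]⋯[C_2X_3][C_1X_2]` (empty product = identity). -/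
def UCNOT (N : ℕ) : Matrix (Fin N → Fin 2) (Fin N → Fin 2) ℂ :=
  (((List.finRange (N - 1)).reverse).map fun k =>
    cnot N ⟨k.val, by have := k.isLt; omega⟩ ⟨k.val + 1, by have := k.isLt; omega⟩).prod

/-- The single-qubit state `v = cos θ |0⟩ + e^{iφ} sin θ |1⟩`. -/
def v1 (θ φ : ℝ) : Fin 2 → ℂ := ![(Real.cos θ : ℂ), Complex.exp (Complex.I * φ) * (Real.sin θ : ℂ)]

/-- The rank-one 2×2 matrix `v v†`. -/
def vvH (θ φ : ℝ) : Matrix (Fin 2) (Fin 2) ℂ :=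
  Matrix.of fun i j => v1 θ φ i * (starRingEnd ℂ) (v1 θ φ j)

namespace Aux

lemma fin2_add_self (a : Fin 2) : a + a = 0 := by revert a; decide

lemma fin2_cases : ∀ a : Fin 2, a = 0 ∨ a = 1 := by decide

lemma fin2_eq_of_add_eq_zero : ∀ a b : Fin 2, a + b = 0 → a = b := by decide

lemma fin2_succ_of_add_eq_one : ∀ a b : Fin 2, a + b = 1 → b = a + 1 := by decide

lemma fin2_shift : ∀ a b : Fin 2, (a + 1) + (b + 1) = a + b := by decide

lemma fin2_cross : ∀ x y z w : Fin 2, x + y ≠ z + w → x + z ≠ y + w := by decide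

lemma fin2_ne_of : ∀ x y z w : Fin 2, x + y ≠ z + w → z = w → x ≠ y := by decide

lemma fin2_eq_of' : ∀ x y z w : Fin 2, x + y ≠ z + w → z ≠ w → x = y := by decide

lemma fin2_ne_add_one : ∀ a : Fin 2, a ≠ a + 1 := by decide

def flip (N : ℕ) (i j : Fin N) (x : Fin N → Fin 2) : Fin N → Fin 2 :=
  Function.update x j (x j + x i)

lemma flip_apply (N : ℕ) (i j : Fin N) (x : Fin N → Fin 2) (k : Fin N) :
    flip N i j x k = if k = j then x j + x i else x k := by
  simp [flip, Function.update_apply]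

lemma flip_flip (N : ℕ) (i j : Fin N) (hij : i ≠ j) (x : Fin N → Fin 2) :
    flip N i j (flip N i j x) = x := by
  funext k
  simp only [flip_apply]
  split_ifs <;> subst_vars <;> first
    | rfl
    | (rw [add_assoc, fin2_add_self, add_zero])

lemma cnot_eq (N : ℕ) (i j : Fin N) :
    cnot N i j = Matrix.of fun b c => if b = flip N i j c then 1 else 0 := rfl

lemma cnot_mul (N : ℕ) (i j : Fin N) (hij : i ≠ j)
    (M : Matrix (Fin N → Fin 2) (Fin N → Fin 2) ℂ) :
    cnot N i j * M = Matrix.of fun b c => M (flip N i j b) c := by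
  ext b c
  simp only [cnot_eq, mul_apply, of_apply, ite_mul, one_mul, zero_mul]
  have : ∀ x, (b = flip N i j x) ↔ (x = flip N i j b) := by
    intro x
    constructor
    · intro h; rw [h, flip_flip _ _ _ hij]
    · intro h; rw [h, flip_flip _ _ _ hij]
  simp only [this]
  rw [Finset.sum_ite_eq' Finset.univ (flip N i j b) (fun x => M x c)]
  simp

lemma mul_cnot (N : ℕ) (i j : Fin N)
    (M : Matrix (Fin N → Fin 2) (Fin N → Fin 2) ℂ) :
    M * cnot N i j = Matrix.of fun b c => M b (flip N i j c) := by
  ext b c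
  simp only [cnot_eq, mul_apply, of_apply, mul_ite, mul_one, mul_zero]
  rw [Finset.sum_ite_eq' Finset.univ (flip N i j c) (fun x => M b x)]
  simp

lemma cnot_conjTranspose (N : ℕ) (i j : Fin N) (hij : i ≠ j) :
    (cnot N i j)ᴴ = cnot N i j := by
  ext b c
  simp only [cnot_eq, conjTranspose_apply, of_apply]
  have key : (c = flip N i j b) ↔ (b = flip N i j c) := by
    constructor
    · intro h; rw [h, flip_flip _ _ _ hij]
    · intro h; rw [h, flip_flip _ _ _ hij]
  by_cases h : c = flip N i j b
  · rw [if_pos h, if_pos (key.mp h)]; exact star_one ℂ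
  · rw [if_neg h, if_neg (fun hh => h (key.mpr hh))]; exact star_zero ℂ

def cnot' (N k : ℕ) : Matrix (Fin N → Fin 2) (Fin N → Fin 2) ℂ :=
  if h : k + 1 < N then cnot N ⟨k, by omega⟩ ⟨k + 1, h⟩ else 1

def W (N m : ℕ) : Matrix (Fin N → Fin 2) (Fin N → Fin 2) ℂ :=
  (((List.range m).reverse).map (cnot' N)).prod

lemma UCNOT_eq (N : ℕ) : UCNOT N = W N (N - 1) := by
  unfold UCNOT W
  congr 1
  have h1 : (List.finRange (N - 1)).map Fin.val = List.range (N - 1) :=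
    List.map_coe_finRange_eq_range
  rw [← h1, ← List.map_reverse, List.map_map]
  apply List.map_congr_left
  intro k _
  simp only [Function.comp]
  unfold cnot'
  rw [dif_pos (by have := k.isLt; omega)]

def G (N m : ℕ) (c : Fin N → Fin 2) : Fin N → Fin 2 := fun j =>
  if h : 1 ≤ j.val ∧ j.val ≤ m then c j + c ⟨j.val - 1, by have := j.isLt; omega⟩ else c j

lemma G_apply_zero (N m : ℕ) (c : Fin N → Fin 2) (j : Fin N) (hj : j.val = 0) :
    G N m c j = c j := by
  unfold G; rw [dif_neg (by omega)]

lemma G_apply_pos (N m : ℕ) (c : Fin N → Fin 2) (j : Fin N) (hj : 1 ≤ j.val) (hj2 : j.val ≤ m) :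
    G N m c j = c j + c ⟨j.val - 1, by have := j.isLt; omega⟩ := by
  unfold G; rw [dif_pos ⟨hj, hj2⟩]

lemma G_zero (N : ℕ) (c : Fin N → Fin 2) : G N 0 c = c := by
  funext j; unfold G; rw [dif_neg (by omega)]

lemma G_flip (N m : ℕ) (h : m + 1 < N) (x : Fin N → Fin 2) :
    G N m (flip N ⟨m, by omega⟩ ⟨m + 1, h⟩ x) = G N (m + 1) x := by
  funext k
  unfold G
  simp only [flip_apply]
  by_cases hk1 : k.val = m + 1
  · have hkeq : k = ⟨m + 1, h⟩ := by apply Fin.ext; exact hk1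
    rw [dif_neg (by omega), dif_pos (by omega)]
    subst hkeq
    rw [if_pos rfl]
    rfl
  · by_cases hk2 : 1 ≤ k.val ∧ k.val ≤ m
    · rw [dif_pos hk2, dif_pos ⟨hk2.1, by omega⟩]
      rw [if_neg (by intro hh; apply hk1; exact congrArg Fin.val hh)]
      rw [if_neg (by intro hh; apply hk1; have := congrArg Fin.val hh; simp at this; omega)]
    · rw [dif_neg hk2, dif_neg (by omega)]
      rw [if_neg (by intro hh; apply hk1; exact congrArg Fin.val hh)]

lemma conj_W (N m : ℕ) (hm : m + 1 ≤ N) (M : Matrix (Fin N → Fin 2) (Fin N → Fin 2) ℂ) :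
    W N m * M * (W N m)ᴴ = Matrix.of fun b c => M (G N m b) (G N m c) := by
  induction m with
  | zero =>
    unfold W
    simp only [List.range_zero, List.reverse_nil, List.map_nil, List.prod_nil,
      one_mul, conjTranspose_one, mul_one]
    ext b c
    simp only [of_apply, G_zero]
  | succ m ih =>
    have hmm : m + 1 < N := by omega
    have hij : (⟨m, by omega⟩ : Fin N) ≠ ⟨m + 1, hmm⟩ := by simp [Fin.ext_iff]
    have hW : W N (m + 1) = cnot' N m * W N m := by
      unfold W
      rw [List.range_succ, List.reverse_append]
      simp
    have hc : cnot' N m = cnot N ⟨m, by omega⟩ ⟨m + 1, hmm⟩ := by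
      unfold cnot'; rw [dif_pos hmm]
    rw [hW, conjTranspose_mul, hc, cnot_conjTranspose _ _ _ hij]
    have hassoc : cnot N ⟨m, by omega⟩ ⟨m + 1, hmm⟩ * W N m * M *
        ((W N m)ᴴ * cnot N ⟨m, by omega⟩ ⟨m + 1, hmm⟩) =
        cnot N ⟨m, by omega⟩ ⟨m + 1, hmm⟩ * (W N m * M * (W N m)ᴴ) *
          cnot N ⟨m, by omega⟩ ⟨m + 1, hmm⟩ := by
      simp only [Matrix.mul_assoc]
    rw [hassoc, ih (by omega), cnot_mul _ _ _ hij, mul_cnot]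
    ext b c
    simp only [of_apply]
    rw [G_flip N m hmm, G_flip N m hmm]

variable (θ φ : ℝ)

lemma exp_eq : Complex.exp (Complex.I * φ) =
    (Real.cos φ : ℂ) + Complex.I * (Real.sin φ : ℂ) := by
  rw [mul_comm, Complex.exp_mul_I, ← Complex.ofReal_cos, ← Complex.ofReal_sin]
  ring

lemma conj_exp : (starRingEnd ℂ) (Complex.exp (Complex.I * φ)) =
    (Real.cos φ : ℂ) - Complex.I * (Real.sin φ : ℂ) := by
  rw [exp_eq, map_add, _root_.map_mul, Complex.conj_I, Complex.conj_ofReal, Complex.conj_ofReal]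
  ring

lemma B00 : ((2 : ℂ) • vvH θ φ - 1) 0 0 = ((Real.cos (2 * θ) : ℝ) : ℂ) := by
  simp only [Matrix.sub_apply, Matrix.smul_apply, Matrix.one_apply_eq, vvH, of_apply, v1,
    Matrix.cons_val_zero, Complex.conj_ofReal, smul_eq_mul]
  rw [Real.cos_two_mul]
  push_cast
  ring

lemma B11 : ((2 : ℂ) • vvH θ φ - 1) 1 1 = -((Real.cos (2 * θ) : ℝ) : ℂ) := by
  simp only [Matrix.sub_apply, Matrix.smul_apply, Matrix.one_apply_eq, vvH, of_apply, v1,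
    Matrix.cons_val_one, Matrix.head_cons, smul_eq_mul, _root_.map_mul,
    Complex.conj_ofReal, conj_exp, Matrix.cons_val_zero]
  have h : Real.cos (2 * θ) = 1 - 2 * Real.sin θ ^ 2 := by
    have := Real.sin_sq_add_cos_sq θ
    rw [Real.cos_two_mul]; nlinarith
  rw [exp_eq, h]
  push_cast
  linear_combination (2 * Complex.sin (θ : ℂ) ^ 2) * Complex.sin_sq_add_cos_sq (φ : ℂ)
    + (-2 * Complex.sin (φ : ℂ) ^ 2 * Complex.sin (θ : ℂ) ^ 2) * Complex.I_sq

lemma B01 : ((2 : ℂ) • vvH θ φ - 1) 0 1 =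
    ((Real.sin (2 * θ) : ℝ) : ℂ) * ((Real.cos φ : ℂ) - Complex.I * (Real.sin φ : ℂ)) := by
  have h1 : (0 : Fin 2) ≠ 1 := by decide
  simp only [Matrix.sub_apply, Matrix.smul_apply, Matrix.one_apply_ne h1, vvH, of_apply, v1,
    Matrix.cons_val_zero, Matrix.cons_val_one, Matrix.head_cons, smul_eq_mul, _root_.map_mul,
    Complex.conj_ofReal, conj_exp]
  rw [Real.sin_two_mul]
  push_cast
  ring

lemma B10 : ((2 : ℂ) • vvH θ φ - 1) 1 0 =
    ((Real.sin (2 * θ) : ℝ) : ℂ) * ((Real.cos φ : ℂ) + Complex.I * (Real.sin φ : ℂ)) := by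
  have h1 : (1 : Fin 2) ≠ 0 := by decide
  simp only [Matrix.sub_apply, Matrix.smul_apply, Matrix.one_apply_ne h1, vvH, of_apply, v1,
    Matrix.cons_val_zero, Matrix.cons_val_one, Matrix.head_cons, smul_eq_mul,
    Complex.conj_ofReal, exp_eq]
  rw [Real.sin_two_mul]
  push_cast
  ring

lemma pX_apply (a b : Fin 2) : pX a b = if a = b then 0 else 1 := by
  fin_cases a <;> fin_cases b <;> simp [pX]

lemma pY_apply (a b : Fin 2) :
    pY a b = if a = b then 0 else if a = 0 then -Complex.I else Complex.I := by
  fin_cases a <;> fin_cases b <;> simp [pY]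

lemma pZ_apply (a b : Fin 2) : pZ a b = if a = b then (if a = 0 then 1 else -1) else 0 := by
  fin_cases a <;> fin_cases b <;> simp [pZ]

end Aux

theorem cnot_conjugation_stabilizer (N : ℕ) (hN : 1 ≤ N) (θ φ : ℝ) :
    UCNOT N *
        tensorVec N (fun j => if (j : ℕ) = 0 then
          (2 : ℂ) • vvH θ φ - (1 : Matrix (Fin 2) (Fin 2) ℂ) else 1) *
        (UCNOT N)ᴴ
      = ((Real.cos (2 * θ) : ℝ) : ℂ) •
            tensorVec N (fun j => if (j : ℕ) = 0 then pZ else 1)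
          + ((Real.sin (2 * θ) : ℝ) : ℂ) •
              (((Real.cos φ : ℝ) : ℂ) • tensorPow N pX
                + ((Real.sin φ : ℝ) : ℂ) •
                    tensorVec N (fun j => if (j : ℕ) = 0 then pY else pX)) := by
  classical
  have h0N : 0 < N := hN
  rw [Aux.UCNOT_eq, Aux.conj_W N (N - 1) (by omega)]
  ext b c
  set B : Matrix (Fin 2) (Fin 2) ℂ := (2 : ℂ) • vvH θ φ - 1 with hBdef
  set j0 : Fin N := ⟨0, h0N⟩ with hj0def
  have hGb0 : Aux.G N (N - 1) b j0 = b j0 := Aux.G_apply_zero _ _ _ _ rfl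
  have hGc0 : Aux.G N (N - 1) c j0 = c j0 := Aux.G_apply_zero _ _ _ _ rfl
  have hval : ∀ j : Fin N, j ≠ j0 → 1 ≤ j.val := by
    intro j hj
    rcases Nat.eq_zero_or_pos j.val with h | h
    · exact absurd (Fin.ext h) hj
    · exact h
  have hGbj : ∀ j : Fin N, j ≠ j0 →
      Aux.G N (N - 1) b j = b j + b ⟨j.val - 1, by have := j.isLt; omega⟩ := fun j hj =>
    Aux.G_apply_pos _ _ _ _ (hval j hj) (by have := j.isLt; omega)
  have hGcj : ∀ j : Fin N, j ≠ j0 →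
      Aux.G N (N - 1) c j = c j + c ⟨j.val - 1, by have := j.isLt; omega⟩ := fun j hj =>
    Aux.G_apply_pos _ _ _ _ (hval j hj) (by have := j.isLt; omega)
  simp only [Matrix.of_apply, Matrix.add_apply, Matrix.smul_apply, smul_eq_mul,
    tensorVec, tensorPow]
  by_cases hP : ∀ j : Fin N, b j + c j = b j0 + c j0
  · -- the "difference" is constant along the chain
    rcases Aux.fin2_cases (b j0 + c j0) with h0 | h0
    · -- b = c
      have hbcj : ∀ j, b j = c j := fun j =>
        Aux.fin2_eq_of_add_eq_zero _ _ (by rw [hP j, h0])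
      have hbc : b = c := funext hbcj
      subst hbc
      have hL : (∏ j : Fin N, (if (j : ℕ) = 0 then B else 1)
          (Aux.G N (N - 1) b j) (Aux.G N (N - 1) b j)) = B (b j0) (b j0) := by
        rw [← Finset.mul_prod_erase Finset.univ _ (Finset.mem_univ j0)]
        rw [if_pos rfl, hGb0]
        rw [Finset.prod_eq_one, mul_one]
        intro j hj
        obtain ⟨hjne, -⟩ := Finset.mem_erase.mp hj
        rw [if_neg (fun h => hjne (Fin.ext h))]
        exact Matrix.one_apply_eq _
      have hZ : (∏ j : Fin N, (if (j : ℕ) = 0 then pZ else 1) (b j) (b j)) = pZ (b j0) (b j0) := by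
        rw [← Finset.mul_prod_erase Finset.univ _ (Finset.mem_univ j0)]
        rw [if_pos rfl, Finset.prod_eq_one, mul_one]
        intro j hj
        obtain ⟨hjne, -⟩ := Finset.mem_erase.mp hj
        rw [if_neg (fun h => hjne (Fin.ext h))]
        exact Matrix.one_apply_eq _
      have hX : (∏ j : Fin N, pX (b j) (b j)) = 0 := by
        apply Finset.prod_eq_zero (Finset.mem_univ j0)
        rw [Aux.pX_apply, if_pos rfl]
      have hY : (∏ j : Fin N, (if (j : ℕ) = 0 then pY else pX) (b j) (b j)) = 0 := by
        apply Finset.prod_eq_zero (Finset.mem_univ j0)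
        rw [if_pos rfl, Aux.pY_apply, if_pos rfl]
      rw [hL, hZ, hX, hY, hBdef]
      rcases Aux.fin2_cases (b j0) with h | h <;> rw [h]
      · rw [Aux.B00, Aux.pZ_apply]
        norm_num
      · rw [Aux.B11, Aux.pZ_apply]
        norm_num
    · -- b and c differ in every bit
      have hcb : ∀ j, c j = b j + 1 := fun j =>
        Aux.fin2_succ_of_add_eq_one _ _ (by rw [hP j, h0])
      have hL : (∏ j : Fin N, (if (j : ℕ) = 0 then B else 1)
          (Aux.G N (N - 1) b j) (Aux.G N (N - 1) c j)) = B (b j0) (c j0) := by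
        rw [← Finset.mul_prod_erase Finset.univ _ (Finset.mem_univ j0)]
        rw [if_pos rfl, hGb0, hGc0]
        rw [Finset.prod_eq_one, mul_one]
        intro j hj
        obtain ⟨hjne, -⟩ := Finset.mem_erase.mp hj
        rw [if_neg (fun h => hjne (Fin.ext h)), hGbj j hjne, hGcj j hjne]
        rw [hcb j, hcb ⟨j.val - 1, by have := j.isLt; omega⟩, Aux.fin2_shift]
        exact Matrix.one_apply_eq _
      have hZ : (∏ j : Fin N, (if (j : ℕ) = 0 then pZ else 1) (b j) (c j)) = 0 := by
        apply Finset.prod_eq_zero (Finset.mem_univ j0)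
        rw [if_pos rfl, hcb j0, Aux.pZ_apply, if_neg (Aux.fin2_ne_add_one _)]
      have hX : (∏ j : Fin N, pX (b j) (c j)) = 1 := by
        apply Finset.prod_eq_one
        intro j _
        rw [hcb j, Aux.pX_apply, if_neg (Aux.fin2_ne_add_one _)]
      have hY : (∏ j : Fin N, (if (j : ℕ) = 0 then pY else pX) (b j) (c j)) =
          pY (b j0) (c j0) := by
        rw [← Finset.mul_prod_erase Finset.univ _ (Finset.mem_univ j0)]
        rw [if_pos rfl, Finset.prod_eq_one, mul_one]
        intro j hj
        obtain ⟨hjne, -⟩ := Finset.mem_erase.mp hj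
        rw [if_neg (fun h => hjne (Fin.ext h)), hcb j, Aux.pX_apply,
          if_neg (Aux.fin2_ne_add_one _)]
      rw [hL, hZ, hX, hY, hcb j0, hBdef]
      rcases Aux.fin2_cases (b j0) with h | h <;> rw [h]
      · have e1 : (0 : Fin 2) + 1 = 1 := by decide
        rw [e1, Aux.B01, Aux.pY_apply, if_neg (by decide), if_pos rfl]
        ring
      · have e1 : (1 : Fin 2) + 1 = 0 := by decide
        rw [e1, Aux.B10, Aux.pY_apply, if_neg (by decide), if_neg (by decide)]
        ring
  · -- the "difference" is not constant: everything vanishes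
    push_neg at hP
    obtain ⟨j1, hj1⟩ := hP
    have hadj : ∃ j : Fin N, 1 ≤ j.val ∧
        b j + c j ≠ b ⟨j.val - 1, by have := j.isLt; omega⟩ +
          c ⟨j.val - 1, by have := j.isLt; omega⟩ := by
      by_contra h
      push_neg at h
      apply hj1
      have key : ∀ n, ∀ hn : n < N, b ⟨n, hn⟩ + c ⟨n, hn⟩ = b j0 + c j0 := by
        intro n
        induction n with
        | zero => intro hn; rfl
        | succ n ih =>
          intro hn
          have h2 := h ⟨n + 1, hn⟩ (by exact Nat.succ_le_succ (Nat.zero_le n))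
          rw [h2]
          exact ih (by omega)
      exact key j1.val j1.isLt
    obtain ⟨ja, hja1, hja2⟩ := hadj
    have hjane : ja ≠ j0 := by
      intro h
      rw [h] at hja1
      exact absurd hja1 (by norm_num [hj0def])
    have hL : (∏ j : Fin N, (if (j : ℕ) = 0 then B else 1)
        (Aux.G N (N - 1) b j) (Aux.G N (N - 1) c j)) = 0 := by
      apply Finset.prod_eq_zero (Finset.mem_univ ja)
      rw [if_neg (fun h => hjane (Fin.ext h)), hGbj ja hjane, hGcj ja hjane]
      exact Matrix.one_apply_ne (Aux.fin2_cross _ _ _ _ hja2)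
    rw [hL]
    by_cases hd0 : b j0 = c j0
    · have hj1ne : b j1 ≠ c j1 := Aux.fin2_ne_of _ _ _ _ hj1 hd0
      have hj1j0 : j1 ≠ j0 := fun h => hj1ne (by rw [h]; exact hd0)
      have hZ : (∏ j : Fin N, (if (j : ℕ) = 0 then pZ else 1) (b j) (c j)) = 0 := by
        apply Finset.prod_eq_zero (Finset.mem_univ j1)
        rw [if_neg (fun h => hj1j0 (Fin.ext h))]
        exact Matrix.one_apply_ne hj1ne
      have hX : (∏ j : Fin N, pX (b j) (c j)) = 0 := by
        apply Finset.prod_eq_zero (Finset.mem_univ j0)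
        rw [← hd0, Aux.pX_apply, if_pos rfl]
      have hY : (∏ j : Fin N, (if (j : ℕ) = 0 then pY else pX) (b j) (c j)) = 0 := by
        apply Finset.prod_eq_zero (Finset.mem_univ j0)
        rw [if_pos rfl, ← hd0, Aux.pY_apply, if_pos rfl]
      rw [hZ, hX, hY]
      ring
    · have hj1eq : b j1 = c j1 := Aux.fin2_eq_of' _ _ _ _ hj1 hd0
      have hj1j0 : j1 ≠ j0 := fun h => hd0 (by rw [← h]; exact hj1eq)
      have hZ : (∏ j : Fin N, (if (j : ℕ) = 0 then pZ else 1) (b j) (c j)) = 0 := by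
        apply Finset.prod_eq_zero (Finset.mem_univ j0)
        rw [if_pos rfl, Aux.pZ_apply, if_neg hd0]
      have hX : (∏ j : Fin N, pX (b j) (c j)) = 0 := by
        apply Finset.prod_eq_zero (Finset.mem_univ j1)
        rw [hj1eq, Aux.pX_apply, if_pos rfl]
      have hY : (∏ j : Fin N, (if (j : ℕ) = 0 then pY else pX) (b j) (c j)) = 0 := by
        apply Finset.prod_eq_zero (Finset.mem_univ j1)
        rw [if_neg (fun h => hj1j0 (Fin.ext h)), hj1eq, Aux.pX_apply, if_pos rfl]
      rw [hZ, hX, hY]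
      ring
end
end
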